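/- arXiv:2409.09769 — 2 statements merged into one kernel-verified Lean document; each statement's English description precedes it below -/
import Mathlib

section
/- If F is absorbing (once entered, the chain stays in F forever), then the probability of ever reaching F equals lim_{γ→1⁻} (1-γ) Σ_{s∈F} β_γ(s), where β_γ is the discounted occupation measure with discount γ. -/
open MeasureTheory Filter
open scoped ENNReal Topology

/-- If `F` is absorbing (`P(s,F) = 1` for all `s ∈ F`), then the probability
of ever reaching `F` equals `lim_{γ→1⁻} (1-γ) ∑_{s∈F} β_γ(s)`, where
`β_γ(s) = ∑' t, γ^t P_ρ(s_t = s)` is the discounted occupation measure. -/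
theorem reach_probability_as_abel_limit
    {S : Type*} [Fintype S] [MeasurableSpace S] [MeasurableSingletonClass S]
    (P : S → S → ℝ≥0∞) (ρ : S → ℝ≥0∞)
    (hρ1 : ∑ s, ρ s = 1) (hP1 : ∀ s, ∑ s', P s s' = 1)
    (F : Finset S) (habs : ∀ s ∈ F, ∑ s' ∈ F, P s s' = 1)
    (μ : Measure (ℕ → S)) [IsProbabilityMeasure μ]
    (hcyl : ∀ (n : ℕ) (path : ℕ → S),
      μ {ω | ∀ i ≤ n, ω i = path i} =
        ρ (path 0) * ∏ i ∈ Finset.range n, P (path i) (path (i + 1)))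
    (β : ℝ → S → ℝ)
    (hβ : ∀ γ s, β γ s = ∑' t : ℕ, γ ^ t * (μ {ω | ω t = s}).toReal) :
    Tendsto (fun γ : ℝ => (1 - γ) * ∑ s ∈ F, β γ s) (𝓝[<] 1)
      (𝓝 ((μ {ω | ∃ t, ω t ∈ F}).toReal)) := by
  classical
  -- S is nonempty
  have hSne : Nonempty S := by
    by_contra h
    rw [not_nonempty_iff] at h
    rw [Finset.univ_eq_empty, Finset.sum_empty] at hρ1
    exact zero_ne_one hρ1
  obtain ⟨s0⟩ := hSne
  -- P s s' = 0 for s ∈ F, s' ∉ F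
  have hP0 : ∀ s ∈ F, ∀ s' ∉ F, P s s' = 0 := by
    intro s hs s' hs'
    have h1 : ∑ x ∈ F, P s x + ∑ x ∈ Fᶜ, P s x = 1 := by
      rw [Finset.sum_add_sum_compl]; exact hP1 s
    rw [habs s hs] at h1
    have h0 : ∑ x ∈ Fᶜ, P s x = 0 := by
      have := (ENNReal.add_right_inj (a := (1 : ℝ≥0∞)) ENNReal.one_ne_top
        (b := ∑ x ∈ Fᶜ, P s x) (c := 0)).mp (by rw [add_zero]; exact h1)
      exact this
    exact (Finset.sum_eq_zero_iff.mp h0) s' (Finset.mem_compl.mpr hs')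
  -- The events A t = {ω | ω t ∈ F}
  set A : ℕ → Set (ℕ → S) := fun t => (fun ω : ℕ → S => ω t) ⁻¹' (F : Set S) with hA
  have mA : ∀ t, MeasurableSet (A t) :=
    fun t => (measurable_pi_apply t) F.finite_toSet.measurableSet
  -- key null set: leaving F has probability 0
  have hnull : ∀ t : ℕ, μ (A t \ A (t + 1)) = 0 := by
    intro t
    have hsub : A t \ A (t + 1) ⊆
        ⋃ v : {v : Fin (t + 2) → S //
            v ⟨t, by omega⟩ ∈ F ∧ v ⟨t + 1, by omega⟩ ∉ F},
          {ω : ℕ → S | ∀ i ≤ t + 1,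
            ω i = (fun j : ℕ => if h : j < t + 2 then v.1 ⟨j, h⟩ else s0) i} := by
      rintro ω ⟨hω1, hω2⟩
      refine Set.mem_iUnion.mpr ⟨⟨fun j => ω j.1, hω1, hω2⟩, ?_⟩
      intro i hi
      simp only [dif_pos (by omega : i < t + 2)]
    refine measure_mono_null hsub (measure_iUnion_null fun v => ?_)
    rw [hcyl (t + 1) _]
    have ht : P ((fun j : ℕ => if h : j < t + 2 then v.1 ⟨j, h⟩ else s0) t)
        ((fun j : ℕ => if h : j < t + 2 then v.1 ⟨j, h⟩ else s0) (t + 1)) = 0 := by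
      simp only [dif_pos (by omega : t < t + 2), dif_pos (by omega : t + 1 < t + 2)]
      exact hP0 _ v.2.1 _ v.2.2
    rw [Finset.prod_eq_zero (Finset.mem_range.mpr (by omega : t < t + 1)) ht, mul_zero]
  -- a.e. monotonicity: μ (A k \ A n) = 0 for k ≤ n
  have hkn : ∀ k n, k ≤ n → μ (A k \ A n) = 0 := by
    intro k n hknle
    induction n with
    | zero =>
      have : k = 0 := by omega
      subst this; simp
    | succ n ih =>
      rcases Nat.lt_or_ge k (n + 1) with h | h
      · have h1 := ih (by omega)
        have hsub : A k \ A (n + 1) ⊆ (A k \ A n) ∪ (A n \ A (n + 1)) := by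
          rintro ω ⟨h1, h2⟩
          by_cases hn : ω ∈ A n
          · exact Or.inr ⟨hn, h2⟩
          · exact Or.inl ⟨h1, hn⟩
        exact measure_mono_null hsub
          (measure_union_null h1 (hnull n))
      · have : k = n + 1 := by omega
        subst this; simp
  have hμmono : ∀ k n, k ≤ n → μ (A k) ≤ μ (A n) := by
    intro k n h
    calc μ (A k) = μ (A k ∩ A n) + μ (A k \ A n) :=
          (measure_inter_add_diff _ (mA n)).symm
      _ = μ (A k ∩ A n) := by rw [hkn k n h, add_zero]
      _ ≤ μ (A n) := measure_mono Set.inter_subset_right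
  -- μ (Accumulate A n) = μ (A n)
  have hacc : ∀ n, μ (Set.accumulate A n) = μ (A n) := by
    intro n
    refine le_antisymm ?_ (measure_mono Set.subset_accumulate)
    calc μ (Set.accumulate A n)
        = μ (Set.accumulate A n ∩ A n) + μ (Set.accumulate A n \ A n) :=
          (measure_inter_add_diff _ (mA n)).symm
      _ ≤ μ (A n) + μ (Set.accumulate A n \ A n) := by
          gcongr; exact Set.inter_subset_right
      _ = μ (A n) := by
          have : Set.accumulate A n \ A n ⊆ ⋃ k : Fin (n + 1), (A k.1 \ A n) := by
            rintro ω ⟨hω1, hω2⟩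
            obtain ⟨k, hk, hωk⟩ := Set.mem_accumulate.mp hω1
            exact Set.mem_iUnion.mpr ⟨⟨k, by omega⟩, hωk, hω2⟩
          rw [measure_mono_null this
            (measure_iUnion_null fun k => hkn k.1 n (by omega)), add_zero]
  -- the target set is the union of the A t
  have hUeq : {ω : ℕ → S | ∃ t, ω t ∈ F} = ⋃ t, A t := by
    ext ω; simp [hA, Set.mem_iUnion]
  have hT : Tendsto (fun n => μ (A n)) atTop (𝓝 (μ {ω : ℕ → S | ∃ t, ω t ∈ F})) := by
    rw [hUeq]
    have := tendsto_measure_iUnion_accumulate (μ := μ) (f := A)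
    exact this.congr hacc
  set L : ℝ := (μ {ω : ℕ → S | ∃ t, ω t ∈ F}).toReal with hL
  set p : ℕ → ℝ := fun t => (μ (A t)).toReal with hpdef
  have hp : Tendsto p atTop (𝓝 L) :=
    (ENNReal.tendsto_toReal (measure_ne_top μ _)).comp hT
  have hp0 : ∀ t, 0 ≤ p t := fun t => ENNReal.toReal_nonneg
  have hp1 : ∀ t, p t ≤ 1 := by
    intro t
    have := prob_le_one (μ := μ) (s := A t)
    calc p t ≤ (1 : ℝ≥0∞).toReal :=
          ENNReal.toReal_mono ENNReal.one_ne_top this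
      _ = 1 := by simp
  have hpmono : ∀ k n, k ≤ n → p k ≤ p n := fun k n h =>
    ENNReal.toReal_mono (measure_ne_top μ _) (hμmono k n h)
  -- the difference sequence
  set d : ℕ → ℝ := fun n => if n = 0 then p 0 else p n - p (n - 1) with hd
  have hdsum : ∀ n, ∑ i ∈ Finset.range (n + 1), d i = p n := by
    intro n
    induction n with
    | zero => simp [hd]
    | succ n ih =>
      rw [Finset.sum_range_succ, ih]
      simp [hd]
  have hpartial : Tendsto (fun n => ∑ i ∈ Finset.range n, d i) atTop (𝓝 L) := by
    rw [← tendsto_add_atTop_iff_nat 1]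
    exact hp.congr fun n => (hdsum n).symm
  have habel := Real.tendsto_tsum_powerSeries_nhdsWithin_lt hpartial
  -- eventual equality on (0,1)
  have hev : ∀ γ ∈ Set.Ioo (0 : ℝ) 1,
      (1 - γ) * ∑ s ∈ F, β γ s = ∑' n, d n * γ ^ n := by
    intro γ ⟨hγ0, hγ1⟩
    have hγ0' : (0 : ℝ) ≤ γ := le_of_lt hγ0
    have hgeo : Summable fun t : ℕ => γ ^ t := summable_geometric_of_lt_one hγ0' hγ1
    -- summability of each β-series
    have hsumm : ∀ s : S, Summable fun t : ℕ => γ ^ t * (μ {ω : ℕ → S | ω t = s}).toReal := by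
      intro s
      refine Summable.of_nonneg_of_le
        (fun t => mul_nonneg (pow_nonneg hγ0' t) ENNReal.toReal_nonneg)
        (fun t => ?_) hgeo
      have h1 : (μ {ω : ℕ → S | ω t = s}).toReal ≤ 1 := by
        calc (μ {ω : ℕ → S | ω t = s}).toReal ≤ (1 : ℝ≥0∞).toReal :=
              ENNReal.toReal_mono ENNReal.one_ne_top (prob_le_one)
          _ = 1 := by simp
      calc γ ^ t * (μ {ω : ℕ → S | ω t = s}).toReal ≤ γ ^ t * 1 := by
            exact mul_le_mul_of_nonneg_left h1 (pow_nonneg hγ0' t)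
        _ = γ ^ t := mul_one _
    -- ∑_{s∈F} μ{ω t = s} relates to p t
    have hps : ∀ t : ℕ, ∑ s ∈ F, (μ {ω : ℕ → S | ω t = s}).toReal = p t := by
      intro t
      have hdecomp : A t = ⋃ s ∈ F, {ω : ℕ → S | ω t = s} := by
        ext ω
        simp [hA, Set.mem_iUnion]
      have hmeas : ∀ s ∈ F, MeasurableSet {ω : ℕ → S | ω t = s} := by
        intro s _
        have : MeasurableSet ((fun ω : ℕ → S => ω t) ⁻¹' {s}) :=
          measurable_pi_apply t (measurableSet_singleton s)
        exact this
      have hdisj : (F : Set S).PairwiseDisjoint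
          (fun s => {ω : ℕ → S | ω t = s}) := by
        intro a _ b _ hab
        refine Set.disjoint_left.mpr fun ω h1 h2 => hab ?_
        rw [← h1, ← h2]
      have hμ : μ (A t) = ∑ s ∈ F, μ {ω : ℕ → S | ω t = s} := by
        rw [hdecomp, measure_biUnion_finset hdisj hmeas]
      rw [hpdef]
      simp only
      rw [hμ, ENNReal.toReal_sum (fun s _ => measure_ne_top μ _)]
    -- ∑_{s∈F} β γ s = ∑' t, p t * γ^t
    have hβsum : ∑ s ∈ F, β γ s = ∑' t : ℕ, p t * γ ^ t := by
      have : ∑ s ∈ F, β γ s =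
          ∑ s ∈ F, ∑' t : ℕ, γ ^ t * (μ {ω : ℕ → S | ω t = s}).toReal := by
        exact Finset.sum_congr rfl fun s _ => hβ γ s
      rw [this, ← Summable.tsum_finsetSum (fun s _ => hsumm s)]
      refine tsum_congr fun t => ?_
      rw [← Finset.mul_sum, hps t, mul_comm]
    rw [hβsum]
    -- summabilities
    have hsp : Summable fun t : ℕ => p t * γ ^ t := by
      refine Summable.of_nonneg_of_le
        (fun t => mul_nonneg (hp0 t) (pow_nonneg hγ0' t)) (fun t => ?_) hgeo
      calc p t * γ ^ t ≤ 1 * γ ^ t :=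
            mul_le_mul_of_nonneg_right (hp1 t) (pow_nonneg hγ0' t)
        _ = γ ^ t := one_mul _
    have hsp' : Summable fun t : ℕ => p (t + 1) * γ ^ (t + 1) :=
      (summable_nat_add_iff (f := fun t : ℕ => p t * γ ^ t) 1).mpr hsp
    have hsp'' : Summable fun t : ℕ => p t * γ ^ (t + 1) := by
      have := hsp.mul_left γ
      refine this.congr fun t => ?_
      ring
    -- the Abel identity
    set Sg : ℝ := ∑' t : ℕ, p t * γ ^ t with hSg
    have key : ∑' n, d n * γ ^ n = (1 - γ) * Sg := by
      have hsd : Summable fun n : ℕ => d n * γ ^ n := by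
        refine Summable.of_norm ?_
        refine Summable.of_nonneg_of_le (fun n => norm_nonneg _) (fun n => ?_) hgeo
        have hdb : |d n| ≤ 1 := by
          rcases Nat.eq_zero_or_pos n with h | h
          · subst h; simp only [hd, if_pos rfl]
            rw [abs_of_nonneg (hp0 0)]; exact hp1 0
          · simp only [hd, if_neg (by omega : n ≠ 0)]
            rw [abs_sub_le_iff]
            constructor
            · linarith [hp1 n, hp0 (n - 1)]
            · linarith [hp1 (n - 1), hp0 n]
        calc ‖d n * γ ^ n‖ = |d n| * |γ ^ n| := by rw [norm_mul]; rfl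
          _ = |d n| * γ ^ n := by rw [abs_of_nonneg (pow_nonneg hγ0' n)]
          _ ≤ 1 * γ ^ n := mul_le_mul_of_nonneg_right hdb (pow_nonneg hγ0' n)
          _ = γ ^ n := one_mul _
      have e1 : ∑' n, d n * γ ^ n = d 0 * γ ^ 0 + ∑' n, d (n + 1) * γ ^ (n + 1) :=
        Summable.tsum_eq_zero_add hsd
      have e2 : Sg = p 0 * γ ^ 0 + ∑' n, p (n + 1) * γ ^ (n + 1) :=
        Summable.tsum_eq_zero_add hsp
      have e3 : ∑' n : ℕ, d (n + 1) * γ ^ (n + 1)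
          = ∑' n : ℕ, (p (n + 1) * γ ^ (n + 1) - p n * γ ^ (n + 1)) := by
        refine tsum_congr fun n => ?_
        simp only [hd, if_neg (Nat.succ_ne_zero n), Nat.add_sub_cancel]
        ring
      have e4 : ∑' n : ℕ, (p (n + 1) * γ ^ (n + 1) - p n * γ ^ (n + 1))
          = (∑' n : ℕ, p (n + 1) * γ ^ (n + 1)) - ∑' n : ℕ, p n * γ ^ (n + 1) :=
        Summable.tsum_sub hsp' hsp''
      have e5 : ∑' n : ℕ, p n * γ ^ (n + 1) = γ * Sg := by
        rw [hSg, ← tsum_mul_left]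
        refine tsum_congr fun n => ?_
        ring
      rw [e1, e3, e4, e5]
      have : d 0 * γ ^ 0 = p 0 * γ ^ 0 := by simp [hd]
      rw [this]
      have e6 : ∑' n : ℕ, p (n + 1) * γ ^ (n + 1) = Sg - p 0 * γ ^ 0 := by
        rw [e2]; ring
      rw [e6]; ring
    rw [key]
  -- conclude by eventual equality
  refine habel.congr' ?_
  filter_upwards [Ioo_mem_nhdsLT_of_mem (show (1 : ℝ) ∈ Set.Ioc (0 : ℝ) 1 by
    constructor <;> norm_num)] with γ hγ
  exact (hev γ hγ).symm
end

section
/- Feasibility of the discounted LP implies the risk bound: if β : S × A → ℝ_{≥0} satisfies the discounted balance equations Σ_{a'} β(s',a') = ρ(s') + γ Σ_{s,a} P(s,a,s') β(s,a) for all s', and Σ_{s,a} c(s) β(s,a) ≤ r_th with c ≥ 0, then the stationary policy π(a|s) = β(s,a)/Σ_{a'} β(s,a') induces a Markov chain whose discounted expected cost E_π[Σ_t γ^t c(s_t)] equals Σ_{s,a} c(s) β(s,a) and hence is at most r_th. -/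
/-- Auxiliary recursion: iterated application of a kernel `M` to a vector `b`. -/
def lpAuxR {S : Type*} [Fintype S] (M : S → S → ℝ) (b : S → ℝ) : ℕ → S → ℝ
  | 0 => b
  | (T + 1) => fun s' => ∑ s, M s s' * lpAuxR M b T s

/-- Feasibility of the discounted LP implies the risk bound: if
`β : S × A → ℝ≥0` satisfies the discounted balance equations and
`∑_{s,a} c(s) β(s,a) ≤ r_th` with `c ≥ 0`, then the stationary policy
`π(a|s) = β(s,a)/∑_{a'} β(s,a')` induces a Markov chain (marginals `p`) whose discounted
expected cost equals `∑_{s,a} c(s) β(s,a)` and hence is at most `r_th`.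
We assume `∑_{a'} β(s,a') > 0` at every state reachable under the induced chain. -/
theorem lp_feasibility_implies_risk_bound
    {S A : Type*} [Fintype S] [Fintype A]
    (P : S → A → S → ℝ) (ρ : S → ℝ) (c : S → ℝ) (γ rth : ℝ)
    (hγ0 : 0 ≤ γ) (hγ1 : γ < 1)
    (hP0 : ∀ s a s', 0 ≤ P s a s') (hP1 : ∀ s a, ∑ s', P s a s' = 1)
    (hρ0 : ∀ s, 0 ≤ ρ s) (hρ1 : ∑ s, ρ s = 1)
    (hc : ∀ s, 0 ≤ c s)
    (β : S → A → ℝ) (hβ0 : ∀ s a, 0 ≤ β s a)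
    (hbal : ∀ s', ∑ a', β s' a' = ρ s' + γ * ∑ s, ∑ a, P s a s' * β s a)
    (hrisk : ∑ s, ∑ a, c s * β s a ≤ rth)
    (π : S → A → ℝ)
    (hπ0 : ∀ s a, 0 ≤ π s a) (hπ1 : ∀ s, ∑ a, π s a = 1)
    (hπ : ∀ s, 0 < ∑ a', β s a' → ∀ a, π s a = β s a / ∑ a', β s a')
    (p : ℕ → S → ℝ)
    (hp0 : ∀ s, p 0 s = ρ s)
    (hps : ∀ t s', p (t + 1) s' = ∑ s, p t s * ∑ a, π s a * P s a s')
    (hreach : ∀ s, (∃ t, 0 < p t s) → 0 < ∑ a', β s a') :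
    (∑' t : ℕ, γ ^ t * ∑ s, p t s * c s) = (∑ s, ∑ a, c s * β s a) ∧
      (∑' t : ℕ, γ ^ t * ∑ s, p t s * c s) ≤ rth := by
  classical
  set b : S → ℝ := fun s => ∑ a', β s a' with hb_def
  set M : S → S → ℝ := fun s s' => ∑ a, π s a * P s a s' with hM_def
  have hb0 : ∀ s, 0 ≤ b s := fun s => Finset.sum_nonneg fun a _ => hβ0 s a
  have hβzero : ∀ s, b s = 0 → ∀ a, β s a = 0 := by
    intro s hbs a
    have := (Finset.sum_eq_zero_iff_of_nonneg (fun a _ => hβ0 s a)).1 hbs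
    exact this a (Finset.mem_univ a)
  have hM0 : ∀ s s', 0 ≤ M s s' :=
    fun s s' => Finset.sum_nonneg fun a _ => mul_nonneg (hπ0 s a) (hP0 s a s')
  have hM1 : ∀ s, ∑ s', M s s' = 1 := by
    intro s
    rw [Finset.sum_comm]
    simp only [← Finset.mul_sum, hP1, mul_one]
    exact hπ1 s
  -- key pointwise identity
  have hkey : ∀ s s', M s s' * b s = ∑ a, P s a s' * β s a := by
    intro s s'
    rcases eq_or_lt_of_le (hb0 s) with h | h
    · rw [← h, mul_zero]
      symm
      exact Finset.sum_eq_zero fun a _ => by rw [hβzero s h.symm a, mul_zero]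
    · simp only [hM_def, Finset.sum_mul]
      refine Finset.sum_congr rfl fun a _ => ?_
      rw [hπ s h a]
      field_simp
      rw [mul_div_assoc, show b s / (∑ a', β s a') = 1 from div_self h.ne', mul_one]
  -- rewritten balance equation
  have hbal' : ∀ s', b s' = ρ s' + γ * ∑ s, M s s' * b s := by
    intro s'
    have h2 : (∑ s, ∑ a, P s a s' * β s a) = ∑ s, M s s' * b s :=
      Finset.sum_congr rfl fun s _ => (hkey s s').symm
    calc b s' = ρ s' + γ * ∑ s, ∑ a, P s a s' * β s a := hbal s'
      _ = ρ s' + γ * ∑ s, M s s' * b s := by rw [h2]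
  -- nonnegativity and total mass of p
  have hp_nonneg : ∀ t s, 0 ≤ p t s := by
    intro t
    induction t with
    | zero => intro s; rw [hp0]; exact hρ0 s
    | succ t ih =>
      intro s'
      rw [hps]
      exact Finset.sum_nonneg fun s _ => mul_nonneg (ih s) (hM0 s s')
  have hpsum : ∀ t, ∑ s, p t s = 1 := by
    intro t
    induction t with
    | zero => simp only [hp0]; exact hρ1
    | succ t ih =>
      simp only [hps]
      show (∑ s', ∑ s, p t s * M s s') = 1
      rw [Finset.sum_comm]
      calc ∑ s, ∑ s', p t s * M s s' = ∑ s, p t s * ∑ s', M s s' := by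
            simp [Finset.mul_sum]
        _ = ∑ s, p t s := by simp only [hM1, mul_one]
        _ = 1 := ih
  -- the remainder sequence
  set r : ℕ → S → ℝ := lpAuxR M b with hr_def
  have hr_zero : r 0 = b := rfl
  have hr_succ : ∀ T s', r (T + 1) s' = ∑ s, M s s' * r T s := fun T s' => rfl
  have hr_nonneg : ∀ T s, 0 ≤ r T s := by
    intro T
    induction T with
    | zero => exact hb0
    | succ T ih =>
      intro s'
      rw [hr_succ]
      exact Finset.sum_nonneg fun s _ => mul_nonneg (hM0 s s') (ih s)
  have hr_sum : ∀ T, ∑ s, r T s = ∑ s, b s := by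
    intro T
    induction T with
    | zero => rfl
    | succ T ih =>
      simp only [hr_succ]
      rw [Finset.sum_comm]
      calc ∑ s, ∑ s', M s s' * r T s = ∑ s, (∑ s', M s s') * r T s := by
            simp [Finset.sum_mul]
        _ = ∑ s, r T s := by simp only [hM1, one_mul]
        _ = ∑ s, b s := ih
  have hr_rec : ∀ T s', r T s' = p T s' + γ * r (T + 1) s' := by
    intro T
    induction T with
    | zero =>
      intro s'
      rw [hr_zero, hp0, hbal' s']
      congr 2
    | succ T ih =>
      intro s'
      rw [hr_succ]
      calc ∑ s, M s s' * r T s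
          = ∑ s, (M s s' * p T s + γ * (M s s' * r (T + 1) s)) := by
            exact Finset.sum_congr rfl fun s _ => by rw [ih s]; ring
        _ = (∑ s, M s s' * p T s) + γ * ∑ s, M s s' * r (T + 1) s := by
            rw [Finset.sum_add_distrib, Finset.mul_sum]
        _ = p (T + 1) s' + γ * r (T + 1 + 1) s' := by
            have h1 : (∑ s, M s s' * p T s) = p (T + 1) s' := by
              rw [hps]
              exact Finset.sum_congr rfl fun s _ => mul_comm _ _
            rw [h1, ← hr_succ]
  -- partial sums formula
  have hpart : ∀ T s', ∑ t ∈ Finset.range T, γ ^ t * p t s' = b s' - γ ^ T * r T s' := by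
    intro T
    induction T with
    | zero => intro s'; simp [hr_zero]
    | succ T ih =>
      intro s'
      rw [Finset.sum_range_succ, ih s']
      have := hr_rec T s'
      rw [pow_succ, this]
      ring
  -- summing against c
  have hsumb : ∑ s, b s ≤ 1 / (1 - γ) := by
    have h1 : ∑ s, b s = 1 + γ * ∑ s, b s := by
      calc ∑ s, b s = ∑ s', (ρ s' + γ * ∑ s, M s s' * b s) :=
            Finset.sum_congr rfl fun s' _ => hbal' s'
        _ = 1 + γ * ∑ s', ∑ s, M s s' * b s := by
            rw [Finset.sum_add_distrib, hρ1, ← Finset.mul_sum]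
        _ = 1 + γ * ∑ s, b s := by
            congr 1
            congr 1
            rw [Finset.sum_comm]
            calc ∑ s, ∑ s', M s s' * b s = ∑ s, (∑ s', M s s') * b s := by
                  simp [Finset.sum_mul]
              _ = ∑ s, b s := by simp only [hM1, one_mul]
    have hγ1' : 0 < 1 - γ := by linarith
    rw [le_div_iff₀ hγ1']
    nlinarith [h1]
  -- the series converges to ∑ s, c s * b s
  have hterm_nonneg : ∀ t, 0 ≤ γ ^ t * ∑ s, p t s * c s := by
    intro t
    exact mul_nonneg (pow_nonneg hγ0 t)
      (Finset.sum_nonneg fun s _ => mul_nonneg (hp_nonneg t s) (hc s))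
  have hpartial_eq : ∀ T, ∑ t ∈ Finset.range T, γ ^ t * ∑ s, p t s * c s
      = (∑ s, c s * b s) - γ ^ T * ∑ s, c s * r T s := by
    intro T
    calc ∑ t ∈ Finset.range T, γ ^ t * ∑ s, p t s * c s
        = ∑ t ∈ Finset.range T, ∑ s, c s * (γ ^ t * p t s) := by
          refine Finset.sum_congr rfl fun t _ => ?_
          rw [Finset.mul_sum]
          exact Finset.sum_congr rfl fun s _ => by ring
      _ = ∑ s, c s * ∑ t ∈ Finset.range T, γ ^ t * p t s := by
          rw [Finset.sum_comm]
          exact Finset.sum_congr rfl fun s _ => (Finset.mul_sum _ _ _).symm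
      _ = ∑ s, c s * (b s - γ ^ T * r T s) := by
          exact Finset.sum_congr rfl fun s _ => by rw [hpart T s]
      _ = (∑ s, c s * b s) - γ ^ T * ∑ s, c s * r T s := by
          rw [Finset.mul_sum, ← Finset.sum_sub_distrib]
          refine Finset.sum_congr rfl fun s _ => by ring
  -- the error term tends to 0
  have hC : ∀ T, 0 ≤ γ ^ T * ∑ s, c s * r T s ∧
      γ ^ T * ∑ s, c s * r T s ≤ γ ^ T * ((∑ s, c s) * (1 / (1 - γ))) := by
    intro T
    constructor
    · exact mul_nonneg (pow_nonneg hγ0 T)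
        (Finset.sum_nonneg fun s _ => mul_nonneg (hc s) (hr_nonneg T s))
    · refine mul_le_mul_of_nonneg_left ?_ (pow_nonneg hγ0 T)
      calc ∑ s, c s * r T s ≤ ∑ s, c s * ∑ s', r T s' := by
            refine Finset.sum_le_sum fun s _ => ?_
            refine mul_le_mul_of_nonneg_left ?_ (hc s)
            exact Finset.single_le_sum (fun s' _ => hr_nonneg T s') (Finset.mem_univ s)
        _ = (∑ s, c s) * ∑ s', r T s' := by rw [Finset.sum_mul]
        _ ≤ (∑ s, c s) * (1 / (1 - γ)) := by
            refine mul_le_mul_of_nonneg_left ?_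
              (Finset.sum_nonneg fun s _ => hc s)
            rw [hr_sum T]
            exact hsumb
  have herr : Filter.Tendsto (fun T => γ ^ T * ∑ s, c s * r T s) Filter.atTop (nhds 0) := by
    have hgeo : Filter.Tendsto (fun T : ℕ => γ ^ T * ((∑ s, c s) * (1 / (1 - γ))))
        Filter.atTop (nhds 0) := by
      have := tendsto_pow_atTop_nhds_zero_of_lt_one hγ0 hγ1
      simpa using this.mul_const ((∑ s, c s) * (1 / (1 - γ)))
    exact squeeze_zero (fun T => (hC T).1) (fun T => (hC T).2) hgeo
  have htend : Filter.Tendsto (fun T => ∑ t ∈ Finset.range T, γ ^ t * ∑ s, p t s * c s)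
      Filter.atTop (nhds (∑ s, c s * b s)) := by
    have : (fun T => ∑ t ∈ Finset.range T, γ ^ t * ∑ s, p t s * c s)
        = fun T => (∑ s, c s * b s) - γ ^ T * ∑ s, c s * r T s := funext hpartial_eq
    rw [this]
    simpa using (tendsto_const_nhds (x := ∑ s, c s * b s)).sub herr
  have hHasSum : HasSum (fun t => γ ^ t * ∑ s, p t s * c s) (∑ s, c s * b s) :=
    (hasSum_iff_tendsto_nat_of_nonneg hterm_nonneg _).2 htend
  have htsum : (∑' t : ℕ, γ ^ t * ∑ s, p t s * c s) = ∑ s, c s * b s := hHasSum.tsum_eq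
  have hfinal : (∑ s, c s * b s) = ∑ s, ∑ a, c s * β s a := by
    refine Finset.sum_congr rfl fun s _ => ?_
    rw [hb_def, Finset.mul_sum]
  refine ⟨by rw [htsum, hfinal], ?_⟩
  rw [htsum, hfinal]
  exact hrisk
end
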